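/- Let M and N be matroids of ranks r and s on the same ground set E such that every flat of N is a flat of M. Then for any subset A of E, rank_N(A) ≤ rank_M(A) ≤ rank_N(A) + r − s. -/

import Mathlib

/-- A matroid given by its rank function on subsets of a finite ground set. -/
structure MatroidRank (α : Type) [DecidableEq α] [Fintype α] where
  r : Finset α → ℕ
  r_empty : r ∅ = 0
  r_le_insert : ∀ A x, r A ≤ r (insert x A)
  insert_le : ∀ A x, r (insert x A) ≤ r A + 1
  r_local : ∀ A x y, r (insert x A) = r A → r (insert y A) = r A →
    r (insert x (insert y A)) = r A

variable {α : Type} [DecidableEq α] [Fintype α]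

/-- `F` is a flat (closed set) of the matroid `M`. -/
def MatroidRank.IsFlat (M : MatroidRank α) (F : Finset α) : Prop :=
  ∀ x ∉ F, M.r F < M.r (insert x F)

/-- Closure of a set in the matroid `M`. -/
def MatroidRank.cl (M : MatroidRank α) (A : Finset α) : Finset α :=
  Finset.univ.filter (fun x => M.r (insert x A) = M.r A)

/-- The matroid `M` has no loops. -/
def MatroidRank.Loopfree (M : MatroidRank α) : Prop :=
  ∀ x : α, M.r {x} = 1

namespace MatroidRank
variable (M : MatroidRank α)

lemma step {A : Finset α} {x : α} (h : M.r (insert x A) = M.r A) (y : α) :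
    M.r (insert x (insert y A)) = M.r (insert y A) := by
  rcases eq_or_lt_of_le (M.r_le_insert A y) with h1 | h1
  · exact (M.r_local A x y h h1.symm).trans h1
  · have h2 : M.r (insert y A) = M.r A + 1 :=
      le_antisymm (M.insert_le A y) h1
    have hle : M.r (insert x (insert y A)) ≤ M.r A + 1 := by
      rw [Finset.insert_comm]
      calc M.r (insert y (insert x A)) ≤ M.r (insert x A) + 1 := M.insert_le _ _
        _ = M.r A + 1 := by rw [h]
    have hge : M.r (insert y A) ≤ M.r (insert x (insert y A)) := M.r_le_insert _ _
    omega

lemma insert_union_eq {A : Finset α} {x : α} (h : M.r (insert x A) = M.r A)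
    (B : Finset α) : M.r (insert x (A ∪ B)) = M.r (A ∪ B) := by
  induction B using Finset.induction with
  | empty => simpa using h
  | insert _ _ hy ih =>
      rw [Finset.union_insert]
      exact M.step ih _

lemma insert_eq_of_subset {A C : Finset α} {x : α} (h : M.r (insert x A) = M.r A)
    (hAC : A ⊆ C) : M.r (insert x C) = M.r C := by
  have := M.insert_union_eq h C
  rwa [Finset.union_eq_right.mpr hAC] at this

lemma r_union_le (A B : Finset α) : M.r A ≤ M.r (A ∪ B) := by
  induction B using Finset.induction with
  | empty => simp
  | insert _ _ hy ih =>
      rw [Finset.union_insert]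
      exact le_trans ih (M.r_le_insert _ _)

lemma r_mono {A B : Finset α} (h : A ⊆ B) : M.r A ≤ M.r B := by
  have := M.r_union_le A B
  rwa [Finset.union_eq_right.mpr h] at this

lemma mem_cl {A : Finset α} {x : α} : x ∈ M.cl A ↔ M.r (insert x A) = M.r A := by
  simp [MatroidRank.cl]

lemma subset_cl (A : Finset α) : A ⊆ M.cl A := by
  intro x hx
  rw [M.mem_cl, Finset.insert_eq_self.mpr hx]

lemma r_cl (A : Finset α) : M.r (M.cl A) = M.r A := by
  have key : ∀ B : Finset α, (∀ y ∈ B, M.r (insert y A) = M.r A) →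
      M.r (A ∪ B) = M.r A := by
    intro B
    induction B using Finset.induction with
    | empty => simp
    | @insert y B hy ih =>
        intro h
        rw [Finset.union_insert]
        rw [M.insert_union_eq (h y (by simp)) B]
        exact ih fun z hz => h z (by simp [hz])
  have := key (M.cl A) (fun y hy => (M.mem_cl.mp hy))
  rwa [Finset.union_eq_right.mpr (M.subset_cl A)] at this

lemma cl_isFlat (A : Finset α) : M.IsFlat (M.cl A) := by
  intro x hx
  rw [M.r_cl]
  have h1 : M.r A < M.r (insert x A) :=
    lt_of_le_of_ne (M.r_le_insert A x) (fun h => hx (M.mem_cl.mpr h.symm))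
  exact lt_of_lt_of_le h1 (M.r_mono (Finset.insert_subset_insert _ (M.subset_cl A)))

end MatroidRank

section Main
variable (M N : MatroidRank α)

lemma key_step (hflats : ∀ F, N.IsFlat F → M.IsFlat F) {A : Finset α} {x : α} (h : M.r (insert x A) = M.r A) :
    N.r (insert x A) = N.r A := by
  by_contra hne
  have hxF : x ∉ N.cl A := fun hx => hne (N.mem_cl.mp hx)
  have hMflat : M.IsFlat (N.cl A) := hflats _ (N.cl_isFlat A)
  have := hMflat x hxF
  have heq : M.r (insert x (N.cl A)) = M.r (N.cl A) :=
    M.insert_eq_of_subset h (N.subset_cl A)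
  omega

lemma diff_mono (hflats : ∀ F, N.IsFlat F → M.IsFlat F) (A B : Finset α) :
    (N.r (A ∪ B) : ℤ) - N.r A ≤ (M.r (A ∪ B) : ℤ) - M.r A := by
  induction B using Finset.induction with
  | empty => simp
  | @insert y B hy ih =>
      rw [Finset.union_insert]
      set C := A ∪ B with hC
      rcases eq_or_lt_of_le (M.r_le_insert C y) with h1 | h1
      · have h2 := key_step M N hflats h1.symm
        have h3 := N.r_le_insert C y
        have h4 := M.r_le_insert C y
        omega
      · have h2 := M.insert_le C y
        have h3 := N.insert_le C y
        have h4 := N.r_le_insert C y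
        omega

end Main


/-- If every flat of N is a flat of M, then
rank_N(A) ≤ rank_M(A) ≤ rank_N(A) + r − s. -/
theorem rank_between (M N : MatroidRank α)
    (hflats : ∀ F, N.IsFlat F → M.IsFlat F)
    (A : Finset α) :
    N.r A ≤ M.r A ∧
      (M.r A : ℤ) ≤ (N.r A : ℤ) + (M.r Finset.univ : ℤ) - (N.r Finset.univ : ℤ) := by
  constructor
  · have := diff_mono M N hflats ∅ A
    simp [M.r_empty, N.r_empty] at this
    exact_mod_cast this
  · have := diff_mono M N hflats A Finset.univ
    rw [Finset.union_eq_right.mpr (Finset.subset_univ A)] at this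
    omega
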